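/- Given a b1-bounded system S1 and a b2-bounded system S2 with disjoint place and transition sets, their synchronous product S1⊗S2 is max{b1,b2}-bounded. -/
import Mathlib


/-- A Petri net over places `P`, transitions `T`, and alphabet `A`.
`pre p t` means there is an arc from place `p` to transition `t`;
`post t p` means there is an arc from transition `t` to place `p`;
`label t = none` means that `t` is silent (labeled `τ`). -/
structure PetriNet (P T A : Type) where
  pre : P → T → Prop
  post : T → P → Prop
  label : T → Option A

namespace PetriNet

variable {P T A : Type}

/-- A transition is enabled if all of its input places are marked. -/
def Enabled (N : PetriNet P T A) (M : P → ℕ) (t : T) : Prop :=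
  ∀ p, N.pre p t → 0 < M p

/-- The marking obtained from `M` by firing the transition `t`. -/
noncomputable def fire (N : PetriNet P T A) (M : P → ℕ) (t : T) : P → ℕ :=
  fun p =>
    letI := Classical.propDecidable
    if N.pre p t ∧ ¬N.post t p then M p - 1
    else if ¬N.pre p t ∧ N.post t p then M p + 1
    else M p

/-- `Fires N M σ M'`: the firing sequence `σ` is enabled at `M` and leads to `M'`,
written `(N,M)[σ⟩(N,M')`. -/
inductive Fires (N : PetriNet P T A) : (P → ℕ) → List T → (P → ℕ) → Prop
  | nil (M : P → ℕ) : Fires N M [] M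
  | cons {M M' : P → ℕ} {t : T} {σ : List T} :
      N.Enabled M t → Fires N (N.fire M t) σ M' → Fires N M (t :: σ) M'

/-- The set of markings reachable from `M0`. -/
def reach (N : PetriNet P T A) (M0 : P → ℕ) : Set (P → ℕ) :=
  {M | ∃ σ : List T, Fires N M0 σ M}

/-- A system is `b`-bounded if every reachable marking has at most `b` tokens on each place. -/
def Bounded (N : PetriNet P T A) (M0 : P → ℕ) (b : ℕ) : Prop :=
  ∀ M ∈ reach N M0, ∀ p, M p ≤ b

/-- A system is live if from every reachable marking every transition can be enabled again. -/
def Live (N : PetriNet P T A) (M0 : P → ℕ) : Prop :=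
  ∀ M ∈ reach N M0, ∀ t : T, ∃ M' ∈ reach N M, N.Enabled M' t

/-- Free choice: any two transitions have equal or disjoint sets of input places. -/
def FreeChoice (N : PetriNet P T A) : Prop :=
  ∀ t t' : T, (∀ p, N.pre p t ↔ N.pre p t') ∨ ∀ p, ¬(N.pre p t ∧ N.pre p t')

/-- A firing sequence is biased if any two distinct transitions occurring in it
have disjoint sets of input places. -/
def Biased (N : PetriNet P T A) (σ : List T) : Prop :=
  ∀ t ∈ σ, ∀ t' ∈ σ, t ≠ t' → ∀ p, ¬(N.pre p t ∧ N.pre p t')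

/-- Undirected adjacency of the underlying bipartite graph. -/
def Adj (N : PetriNet P T A) : P ⊕ T → P ⊕ T → Prop
  | Sum.inl p, Sum.inr t => N.pre p t ∨ N.post t p
  | Sum.inr t, Sum.inl p => N.pre p t ∨ N.post t p
  | _, _ => False

/-- The underlying graph of the net is weakly connected. -/
def WeaklyConnected (N : PetriNet P T A) : Prop :=
  ∀ x y : P ⊕ T, Relation.ReflTransGen N.Adj x y

end PetriNet

open PetriNet

/-- An accepting system: a Petri net with an initial and a final marking. -/
structure AcceptingSystem (P T A : Type) where
  net : PetriNet P T A
  init : P → ℕ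
  final : P → ℕ

/-- A complete firing sequence leads from the initial to the final marking. -/
def CompleteFiring {P T A : Type} (S : AcceptingSystem P T A) (σ : List T) : Prop :=
  Fires S.net S.init σ S.final

/-- A move: `none` in a component stands for the no-move symbol `≫`. -/
abbrev Move (A T : Type) := Option A × Option T

/-- Legal moves: synchronous moves, log moves, and model moves. -/
def LegalMove {P T A : Type} (N : PetriNet P T A) : Move A T → Prop
  | (some a, some t) => N.label t = some a
  | (some _, none) => True
  | (none, some _) => True
  | (none, none) => False

/-- `γ` is an alignment between the trace `σ` and the accepting system `S`. -/
def IsAlignment {P T A : Type} (S : AcceptingSystem P T A) (σ : List A)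
    (γ : List (Move A T)) : Prop :=
  (∀ m ∈ γ, LegalMove S.net m) ∧
  γ.filterMap Prod.fst = σ ∧
  CompleteFiring S (γ.filterMap Prod.snd)

/-- The cost of an alignment with respect to a cost function. -/
def alignCost {A T : Type} (c : Move A T → NNReal) (γ : List (Move A T)) : NNReal :=
  (γ.map c).sum
/-- Transitions of the synchronous product: synchronous pairs `(t1,t2)` with equal labels,
and the moves `(t1,≫)` and `(≫,t2)`, where `none` plays the role of `≫`. -/
def SyncTrans {P1 T1 P2 T2 A : Type} (N1 : PetriNet P1 T1 A) (N2 : PetriNet P2 T2 A) : Type :=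
  {x : Option T1 × Option T2 //
    (∃ t1 t2, x = (some t1, some t2) ∧ N1.label t1 = N2.label t2) ∨
    (∃ t1, x = (some t1, none)) ∨ (∃ t2, x = (none, some t2))}

/-- The Petri net underlying the synchronous product of two nets. A product transition
inherits the arcs of its (non-`≫`) components. -/
def syncProdNet {P1 T1 P2 T2 A : Type} (N1 : PetriNet P1 T1 A) (N2 : PetriNet P2 T2 A) :
    PetriNet (P1 ⊕ P2) (SyncTrans N1 N2) A where
  pre p t :=
    match p with
    | Sum.inl p1 => ∃ t1, t.val.1 = some t1 ∧ N1.pre p1 t1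
    | Sum.inr p2 => ∃ t2, t.val.2 = some t2 ∧ N2.pre p2 t2
  post t p :=
    match p with
    | Sum.inl p1 => ∃ t1, t.val.1 = some t1 ∧ N1.post t1 p1
    | Sum.inr p2 => ∃ t2, t.val.2 = some t2 ∧ N2.post t2 p2
  label t := t.val.1.bind N1.label

/-- The synchronous product of two accepting systems: places are the disjoint union of the
places, the initial (final) marking is the sum of the initial (final) markings. -/
def syncProd {P1 T1 P2 T2 A : Type}
    (S1 : AcceptingSystem P1 T1 A) (S2 : AcceptingSystem P2 T2 A) :
    AcceptingSystem (P1 ⊕ P2) (SyncTrans S1.net S2.net) A where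
  net := syncProdNet S1.net S2.net
  init := Sum.elim S1.init S2.init
  final := Sum.elim S1.final S2.final
section Aux

variable {P1 T1 P2 T2 A : Type} {N1 : PetriNet P1 T1 A} {N2 : PetriNet P2 T2 A}

lemma fire_inl_some (M : P1 ⊕ P2 → ℕ) (t : SyncTrans N1 N2) (t1 : T1)
    (h : t.val.1 = some t1) :
    (fun p => (syncProdNet N1 N2).fire M t (Sum.inl p))
      = N1.fire (fun p => M (Sum.inl p)) t1 := by
  funext p
  have hpre : (syncProdNet N1 N2).pre (Sum.inl p) t ↔ N1.pre p t1 := by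
    simp [syncProdNet, h]
  have hpost : (syncProdNet N1 N2).post t (Sum.inl p) ↔ N1.post t1 p := by
    simp [syncProdNet, h]
  simp only [PetriNet.fire]
  congr 1
  · rw [eq_iff_iff]; exact and_congr hpre (not_congr hpost)
  · congr 1
    rw [eq_iff_iff]; exact and_congr (not_congr hpre) hpost

lemma fire_inr_some (M : P1 ⊕ P2 → ℕ) (t : SyncTrans N1 N2) (t2 : T2)
    (h : t.val.2 = some t2) :
    (fun p => (syncProdNet N1 N2).fire M t (Sum.inr p))
      = N2.fire (fun p => M (Sum.inr p)) t2 := by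
  funext p
  have hpre : (syncProdNet N1 N2).pre (Sum.inr p) t ↔ N2.pre p t2 := by
    simp [syncProdNet, h]
  have hpost : (syncProdNet N1 N2).post t (Sum.inr p) ↔ N2.post t2 p := by
    simp [syncProdNet, h]
  simp only [PetriNet.fire]
  congr 1
  · rw [eq_iff_iff]; exact and_congr hpre (not_congr hpost)
  · congr 1
    rw [eq_iff_iff]; exact and_congr (not_congr hpre) hpost

lemma fire_inl_none (M : P1 ⊕ P2 → ℕ) (t : SyncTrans N1 N2)
    (h : t.val.1 = none) :
    (fun p => (syncProdNet N1 N2).fire M t (Sum.inl p))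
      = fun p => M (Sum.inl p) := by
  funext p
  have hpre : ¬ (syncProdNet N1 N2).pre (Sum.inl p) t := by
    simp [syncProdNet, h]
  have hpost : ¬ (syncProdNet N1 N2).post t (Sum.inl p) := by
    simp [syncProdNet, h]
  simp only [PetriNet.fire]
  rw [if_neg (fun hc => hpre hc.1), if_neg (fun hc => hpost hc.2)]

lemma fire_inr_none (M : P1 ⊕ P2 → ℕ) (t : SyncTrans N1 N2)
    (h : t.val.2 = none) :
    (fun p => (syncProdNet N1 N2).fire M t (Sum.inr p))
      = fun p => M (Sum.inr p) := by
  funext p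
  have hpre : ¬ (syncProdNet N1 N2).pre (Sum.inr p) t := by
    simp [syncProdNet, h]
  have hpost : ¬ (syncProdNet N1 N2).post t (Sum.inr p) := by
    simp [syncProdNet, h]
  simp only [PetriNet.fire]
  rw [if_neg (fun hc => hpre hc.1), if_neg (fun hc => hpost hc.2)]

lemma fires_proj1 {M M' : P1 ⊕ P2 → ℕ} {σ : List (SyncTrans N1 N2)}
    (h : Fires (syncProdNet N1 N2) M σ M') :
    Fires N1 (fun p => M (Sum.inl p)) (σ.filterMap (fun t => t.val.1))
      (fun p => M' (Sum.inl p)) := by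
  induction h with
  | nil M => exact Fires.nil _
  | @cons M M' t σ hen hf ih =>
    rw [List.filterMap_cons]
    cases ht : t.val.1 with
    | none =>
      simpa only [← fire_inl_none M t ht] using ih
    | some t1 =>
      refine Fires.cons (fun p hp => hen (Sum.inl p) ⟨t1, ht, hp⟩) ?_
      rw [← fire_inl_some M t t1 ht]
      exact ih

lemma fires_proj2 {M M' : P1 ⊕ P2 → ℕ} {σ : List (SyncTrans N1 N2)}
    (h : Fires (syncProdNet N1 N2) M σ M') :
    Fires N2 (fun p => M (Sum.inr p)) (σ.filterMap (fun t => t.val.2))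
      (fun p => M' (Sum.inr p)) := by
  induction h with
  | nil M => exact Fires.nil _
  | @cons M M' t σ hen hf ih =>
    rw [List.filterMap_cons]
    cases ht : t.val.2 with
    | none =>
      simpa only [← fire_inr_none M t ht] using ih
    | some t2 =>
      refine Fires.cons (fun p hp => hen (Sum.inr p) ⟨t2, ht, hp⟩) ?_
      rw [← fire_inr_some M t t2 ht]
      exact ih

end Aux

/-- The synchronous product of a `b1`-bounded system and a `b2`-bounded system is
`max{b1,b2}`-bounded. -/
theorem syncProd_bounded {P1 T1 P2 T2 A : Type}
    [Fintype P1] [Fintype T1] [Fintype P2] [Fintype T2]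
    (S1 : AcceptingSystem P1 T1 A) (S2 : AcceptingSystem P2 T2 A)
    (hconn1 : S1.net.WeaklyConnected) (hconn2 : S2.net.WeaklyConnected)
    (b1 b2 : ℕ) (hb1 : Bounded S1.net S1.init b1) (hb2 : Bounded S2.net S2.init b2) :
    Bounded (syncProd S1 S2).net (syncProd S1 S2).init (max b1 b2) := by
  rintro M ⟨σ, hσ⟩ p
  cases p with
  | inl p =>
    have h1 : Fires S1.net S1.init (σ.filterMap (fun t => t.val.1))
        (fun p => M (Sum.inl p)) := fires_proj1 hσ
    exact le_trans (hb1 _ ⟨_, h1⟩ p) (le_max_left b1 b2)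
  | inr p =>
    have h2 : Fires S2.net S2.init (σ.filterMap (fun t => t.val.2))
        (fun p => M (Sum.inr p)) := fires_proj2 hσ
    exact le_trans (hb2 _ ⟨_, h2⟩ p) (le_max_right b1 b2)
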